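/- Let n ≥ 1, c ≥ 1, 0 < ε ≤ 1, and let q, q' : Fin n → Fin c → ℝ be two arrays whose rows are probability vectors (all entries in [0,1] and each row sums to 1) and which agree on every row except possibly one row j. Define the averaged assignments p_l = (1/n) Σ_{i=1}^{n} q_{il} and p'_l = (1/n) Σ_{i=1}^{n} q'_{il}, and assume p_l, p'_l ∈ [ε, 1] for all l. Then |Σ_{l=1}^{c} p_l log p_l − Σ_{l=1}^{c} p'_l log p'_l| ≤ 2 (1 + log(1/ε)) / n. -/
import Mathlib

/-- `x log x` is `(1 + log(1/ε))`-Lipschitz on `[ε, 1]`, ordered version. -/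
lemma xlogx_lip_aux (ε x y : ℝ) (hε0 : 0 < ε)
    (hx : x ∈ Set.Icc ε 1) (hy : y ∈ Set.Icc ε 1) (hxy : y ≤ x) :
    |x * Real.log x - y * Real.log y| ≤ (1 + Real.log (1 / ε)) * |x - y| := by
  obtain ⟨hxε, hx1⟩ := hx
  obtain ⟨hyε, hy1⟩ := hy
  have hx0 : 0 < x := lt_of_lt_of_le hε0 hxε
  have hy0 : 0 < y := lt_of_lt_of_le hε0 hyε
  have key : x * Real.log x - y * Real.log y
      = (x - y) * Real.log x + y * (Real.log x - Real.log y) := by ring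
  have hlogx_le : Real.log x ≤ 0 := Real.log_nonpos (le_of_lt hx0) hx1
  have hlogε : -Real.log x ≤ Real.log (1 / ε) := by
    rw [Real.log_div one_ne_zero (ne_of_gt hε0), Real.log_one]
    have := Real.log_le_log hε0 hxε
    linarith
  have h1 : |(x - y) * Real.log x| ≤ Real.log (1 / ε) * (x - y) := by
    rw [abs_mul, abs_of_nonneg (by linarith : (0:ℝ) ≤ x - y),
      abs_of_nonpos hlogx_le]
    have : (0:ℝ) ≤ x - y := by linarith
    nlinarith
  have hlog_mono : Real.log y ≤ Real.log x := Real.log_le_log hy0 hxy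
  have h2 : |y * (Real.log x - Real.log y)| ≤ x - y := by
    rw [abs_of_nonneg (by nlinarith : (0:ℝ) ≤ y * (Real.log x - Real.log y))]
    have hlog : Real.log x - Real.log y = Real.log (x / y) := by
      rw [Real.log_div (ne_of_gt hx0) (ne_of_gt hy0)]
    have hle : Real.log (x / y) ≤ x / y - 1 :=
      Real.log_le_sub_one_of_pos (div_pos hx0 hy0)
    rw [hlog]
    calc y * Real.log (x / y) ≤ y * (x / y - 1) := by
          apply mul_le_mul_of_nonneg_left hle (le_of_lt hy0)
      _ = x - y := by field_simp
  rw [key, abs_of_nonneg (by linarith : (0:ℝ) ≤ x - y)]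
  calc |(x - y) * Real.log x + y * (Real.log x - Real.log y)|
      ≤ |(x - y) * Real.log x| + |y * (Real.log x - Real.log y)| := abs_add_le _ _
    _ ≤ Real.log (1 / ε) * (x - y) + (x - y) := add_le_add h1 h2
    _ = (1 + Real.log (1 / ε)) * (x - y) := by ring

lemma xlogx_lip (ε x y : ℝ) (hε0 : 0 < ε)
    (hx : x ∈ Set.Icc ε 1) (hy : y ∈ Set.Icc ε 1) :
    |x * Real.log x - y * Real.log y| ≤ (1 + Real.log (1 / ε)) * |x - y| := by
  rcases le_total y x with h | h
  · exact xlogx_lip_aux ε x y hε0 hx hy h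
  · rw [abs_sub_comm, abs_sub_comm x y]
    exact xlogx_lip_aux ε y x hε0 hy hx h

/-- Bounded-difference step in the proof of Lemma 2: if two arrays of probability rows
agree in all rows except possibly row `j`, and the column averages lie in `[ε, 1]`,
then the negative-entropy values of the averages differ by at most `2(1 + log(1/ε))/n`. -/
theorem bounded_difference_entropy_average
    (n c : ℕ) (hn : 1 ≤ n) (hc : 1 ≤ c) (ε : ℝ) (hε0 : 0 < ε) (hε1 : ε ≤ 1)
    (q q' : Fin n → Fin c → ℝ)
    (hq01 : ∀ i l, q i l ∈ Set.Icc (0 : ℝ) 1) (hq'01 : ∀ i l, q' i l ∈ Set.Icc (0 : ℝ) 1)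
    (hqsum : ∀ i, ∑ l, q i l = 1) (hq'sum : ∀ i, ∑ l, q' i l = 1)
    (j : Fin n) (hagree : ∀ i, i ≠ j → q i = q' i)
    (p p' : Fin c → ℝ)
    (hp : ∀ l, p l = (1 / n : ℝ) * ∑ i, q i l)
    (hp' : ∀ l, p' l = (1 / n : ℝ) * ∑ i, q' i l)
    (hpε : ∀ l, p l ∈ Set.Icc ε 1) (hp'ε : ∀ l, p' l ∈ Set.Icc ε 1) :
    |∑ l, p l * Real.log (p l) - ∑ l, p' l * Real.log (p' l)|
      ≤ 2 * (1 + Real.log (1 / ε)) / n := by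
  have hn0 : (0:ℝ) < n := by exact_mod_cast hn
  have hL0 : (0:ℝ) ≤ 1 + Real.log (1 / ε) := by
    have : (0:ℝ) ≤ Real.log (1 / ε) := Real.log_nonneg (by
      rw [le_div_iff₀ hε0]; linarith)
    linarith
  set L := 1 + Real.log (1 / ε) with hL
  -- difference of averages
  have hdiff : ∀ l, p l - p' l = (1 / n : ℝ) * (q j l - q' j l) := by
    intro l
    rw [hp l, hp' l, ← mul_sub, ← Finset.sum_sub_distrib]
    congr 1
    rw [Finset.sum_eq_single j]
    · intro i _ hij; rw [hagree i hij]; ring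
    · intro h; exact absurd (Finset.mem_univ j) h
  have step1 : |∑ l, p l * Real.log (p l) - ∑ l, p' l * Real.log (p' l)|
      ≤ ∑ l, L * |p l - p' l| := by
    rw [← Finset.sum_sub_distrib]
    refine le_trans (Finset.abs_sum_le_sum_abs _ _) ?_
    apply Finset.sum_le_sum
    intro l _
    exact xlogx_lip ε (p l) (p' l) hε0 (hpε l) (hp'ε l)
  have step2 : ∑ l, L * |p l - p' l| ≤ L * (2 / n) := by
    have : ∑ l, L * |p l - p' l| = L * ((1/n) * ∑ l, |q j l - q' j l|) := by
      rw [Finset.mul_sum, Finset.mul_sum]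
      apply Finset.sum_congr rfl
      intro l _
      rw [hdiff l, abs_mul, abs_of_nonneg (by positivity : (0:ℝ) ≤ (1:ℝ)/n)]
    rw [this]
    apply mul_le_mul_of_nonneg_left _ hL0
    have hsum : ∑ l, |q j l - q' j l| ≤ 2 := by
      calc ∑ l, |q j l - q' j l| ≤ ∑ l, (q j l + q' j l) := by
            apply Finset.sum_le_sum
            intro l _
            have h1 := (hq01 j l).1
            have h2 := (hq'01 j l).1
            rw [abs_sub_le_iff]
            constructor <;> linarith
        _ = 2 := by rw [Finset.sum_add_distrib, hqsum j, hq'sum j]; norm_num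
    calc (1/n : ℝ) * ∑ l, |q j l - q' j l| ≤ (1/n) * 2 := by
          apply mul_le_mul_of_nonneg_left hsum (by positivity)
      _ = 2 / n := by ring
  calc |∑ l, p l * Real.log (p l) - ∑ l, p' l * Real.log (p' l)|
      ≤ ∑ l, L * |p l - p' l| := step1
    _ ≤ L * (2 / n) := step2
    _ = 2 * L / n := by ring
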